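/- Assume 1 ≤ k(n) < d(n) for all n ≥ 1. Then t(0)/r(0) = 0, the sequence (t(n)/r(n))_{n≥0} of real numbers is strictly increasing (t(n)/r(n) < t(n+1)/r(n+1) for all n ≥ 0), and t(n)/r(n) < 1/2 for all n ≥ 0. -/

import Mathlib

/-- with 1 ≤ k(n) < d(n) for all n ≥ 1, one has t(0)/r(0) = 0,
the sequence t(n)/r(n) is strictly increasing, and t(n)/r(n) < 1/2 for all n. -/
theorem stmt_1 (d k : ℕ → ℕ) (hd0 : d 0 = 1) (hk0 : k 0 = 0)
    (hk : ∀ n, 1 ≤ n → 1 ≤ k n) (hkd : ∀ n, 1 ≤ n → k n < d n)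
    (r t : ℕ → ℕ)
    (hr : ∀ n, r n = ∏ j ∈ Finset.range (n + 1), (d j + k j))
    (ht0 : t 0 = 0)
    (ht : ∀ n, t (n + 1) = d (n + 1) * t n + k (n + 1) * (r n - t n)) :
    (t 0 : ℝ) / (r 0 : ℝ) = 0 ∧
    (∀ n : ℕ, (t n : ℝ) / (r n : ℝ) < (t (n + 1) : ℝ) / (r (n + 1) : ℝ)) ∧
    (∀ n : ℕ, (t n : ℝ) / (r n : ℝ) < 1 / 2) := by
  have hrpos : ∀ n, 0 < r n := by
    intro n
    rw [hr]
    apply Finset.prod_pos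
    intro j _
    rcases Nat.eq_zero_or_pos j with h | h
    · subst h; simp [hd0, hk0]
    · have := hk j h; omega
  have hrs : ∀ n, r (n + 1) = r n * (d (n + 1) + k (n + 1)) := by
    intro n
    rw [hr, hr, Finset.prod_range_succ]
  have key : ∀ n, 2 * t n < r n := by
    intro n
    induction n with
    | zero => simp [ht0]; exact hrpos 0
    | succ n ih =>
      have hle : t n ≤ r n := by omega
      have hkd' := hkd (n + 1) (by omega)
      have hk' := hk (n + 1) (by omega)
      rw [ht, hrs]
      zify [hle]
      zify [hle] at ih
      nlinarith [ih, hkd', hk']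
  have key2 : ∀ n, t n * r (n + 1) < t (n + 1) * r n := by
    intro n
    have hle : t n ≤ r n := by have := key n; omega
    have hk' := hk (n + 1) (by omega)
    have h1 : t n * (d (n + 1) + k (n + 1)) < t (n + 1) := by
      rw [ht]
      zify [hle]
      have hk2 : (1 : ℤ) ≤ (k (n+1) : ℤ) := by exact_mod_cast hk'
      have h2t : (2 : ℤ) * t n < r n := by exact_mod_cast key n
      nlinarith
    calc t n * r (n + 1) = t n * (d (n + 1) + k (n + 1)) * r n := by
          rw [hrs]; ring
      _ < t (n + 1) * r n := by
          exact Nat.mul_lt_mul_of_lt_of_le h1 le_rfl (hrpos n)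
  refine ⟨by simp [ht0], ?_, ?_⟩
  · intro n
    rw [div_lt_div_iff₀ (by exact_mod_cast hrpos n) (by exact_mod_cast hrpos (n+1))]
    exact_mod_cast key2 n
  · intro n
    rw [div_lt_div_iff₀ (by exact_mod_cast hrpos n) two_pos]
    have h2 : ((2 * t n : ℕ) : ℝ) < ((r n : ℕ) : ℝ) := by exact_mod_cast key n
    push_cast at h2 ⊢
    linarith
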